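/- In the College Admissions problem with common quotas, if the family of quota-sets is nested (any two quota-sets are disjoint or one contains the other) and preferences are strict, then a stable matching always exists. -/

import Mathlib

open Finset
open scoped Classical

/-- Number of students admitted by `x` to colleges of the quota-set `Cs p`. -/
def countIn {n m q : ℕ} (Cs : Fin q → Finset (Fin m))
    (x : Fin n → Fin m → ℕ) (p : Fin q) : ℕ :=
  ∑ i, ∑ j ∈ Cs p, x i j

/-- Number of students admitted by `x` to colleges of `Cs p` with score
strictly greater than `σ`. -/
def countHigher {n m q : ℕ} (Cs : Fin q → Finset (Fin m))
    (s : Fin n → Fin m → ℕ) (x : Fin n → Fin m → ℕ) (p : Fin q) (σ : ℕ) : ℕ :=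
  ∑ i, ∑ j ∈ (Cs p).filter fun j => σ < s i j, x i j

/-- Feasibility for the College Admissions problem with common quotas: a
feasible matching additionally respecting each common quota `uq p` over the
quota-set `Cs p`. -/
def FeasibleCQ {n m q : ℕ} (E : Finset (Fin n × Fin m)) (u : Fin m → ℕ)
    (Cs : Fin q → Finset (Fin m)) (uq : Fin q → ℕ)
    (x : Fin n → Fin m → ℕ) : Prop :=
  (∀ i j, x i j ≤ 1) ∧ (∀ i j, x i j = 1 → (i, j) ∈ E) ∧
  (∀ i : Fin n, ∑ j, x i j ≤ 1) ∧ (∀ j : Fin m, ∑ i, x i j ≤ u j) ∧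
  (∀ p, countIn Cs x p ≤ uq p)

/-- Stability with common quotas: every applicant not admitted to a college
`j` on her list, nor to any college she prefers, is blocked by some
quota-set containing `j` all of whose places are filled by strictly
higher-scoring applicants. -/
def StableCQ {n m q : ℕ} (E : Finset (Fin n × Fin m))
    (r s : Fin n → Fin m → ℕ) (Cs : Fin q → Finset (Fin m)) (uq : Fin q → ℕ)
    (x : Fin n → Fin m → ℕ) : Prop :=
  ∀ i j, (i, j) ∈ E → (∀ k, x i k = 1 → r i j < r i k) →
    ∃ p, j ∈ Cs p ∧ uq p ≤ countHigher Cs s x p (s i j)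

section DAaux

lemma card_filter_ins_erase {α : Type*} [DecidableEq α] {C : Finset α} {f g₀ : α}
    (hf : f ∉ C) (hg : g₀ ∈ C) (q : α → Prop) [DecidablePred q] :
    (((insert f (C.erase g₀)).filter q).card + (if q g₀ then 1 else 0)) =
      ((C.filter q).card + (if q f then 1 else 0)) := by
  have h2 : (C.erase g₀).filter q = (C.filter q).erase g₀ := by
    ext a; simp [Finset.mem_erase, Finset.mem_filter]; tauto
  have hfmem : f ∉ (C.filter q).erase g₀ := by
    intro hmem
    exact hf (Finset.mem_filter.1 (Finset.mem_of_mem_erase hmem)).1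
  have hgcard : ((C.filter q).erase g₀).card + (if q g₀ then 1 else 0) = (C.filter q).card := by
    by_cases hq : q g₀
    · have hmem : g₀ ∈ C.filter q := Finset.mem_filter.2 ⟨hg, hq⟩
      have : 0 < (C.filter q).card := Finset.card_pos.2 ⟨g₀, hmem⟩
      simp [hq, Finset.card_erase_of_mem hmem]; omega
    · simp [hq, Finset.erase_eq_of_notMem (fun hmem => hq (Finset.mem_filter.1 hmem).2)]
  by_cases hqf : q f
  · rw [Finset.filter_insert, if_pos hqf, h2, Finset.card_insert_of_notMem hfmem]
    simp [hqf]; omega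
  · rw [Finset.filter_insert, if_neg hqf, h2]
    simp [hqf]; omega

lemma lex_lt_aux {a b c d K : ℕ} (hd : d < K) (h : a * K + b < c * K + d) :
    a < c ∨ (a = c ∧ b < d) := by
  rcases lt_trichotomy a c with h' | h' | h'
  · exact Or.inl h'
  · subst h'; exact Or.inr ⟨rfl, by omega⟩
  · exfalso
    have h1 : (c + 1) * K ≤ a * K := Nat.mul_le_mul_right K h'
    nlinarith

lemma lex_eq_aux {a b c d K : ℕ} (hb : b < K) (hd : d < K) (h : a * K + b = c * K + d) :
    a = c ∧ b = d := by
  have hK : 0 < K := by omega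
  have h1 : (K * a + b) / K = a + b / K := Nat.mul_add_div hK a b
  have h2 : (K * c + d) / K = c + d / K := Nat.mul_add_div hK c d
  have hb0 : b / K = 0 := Nat.div_eq_of_lt hb
  have hd0 : d / K = 0 := Nat.div_eq_of_lt hd
  have hac : a = c := by
    have h3 : (a * K + b) / K = a := by rw [mul_comm a K, Nat.mul_add_div hK, hb0, add_zero]
    have h4 : (c * K + d) / K = c := by rw [mul_comm c K, Nat.mul_add_div hK, hd0, add_zero]
    rw [← h3, ← h4, h]
  subst hac
  exact ⟨rfl, by omega⟩

variable {n m q : ℕ}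

/-- Processing key: smaller key = processed earlier = higher score
(ties broken by applicant index, then by the applicant's preference). -/
noncomputable def daKey (E : Finset (Fin n × Fin m)) (r s : Fin n → Fin m → ℕ)
    (e : Fin n × Fin m) : ℕ :=
  ((E.sup (fun e => s e.1 e.2) + 1 - s e.1 e.2) * n + e.1.val) *
      (E.sup (fun e => r e.1 e.2) + 1) + r e.1 e.2

lemma daKey_lt {E : Finset (Fin n × Fin m)} {r s : Fin n → Fin m → ℕ}
    {e e' : Fin n × Fin m} (he : e ∈ E) (he' : e' ∈ E)
    (h : daKey E r s e' < daKey E r s e) :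
    s e.1 e.2 < s e'.1 e'.2 ∨
      (s e'.1 e'.2 = s e.1 e.2 ∧ (e'.1.val < e.1.val ∨
        (e'.1 = e.1 ∧ r e'.1 e'.2 < r e.1 e.2))) := by
  set N := E.sup (fun e => s e.1 e.2) with hN
  have hsb : s e.1 e.2 ≤ N := Finset.le_sup (f := fun e => s e.1 e.2) he
  have hsb' : s e'.1 e'.2 ≤ N := Finset.le_sup (f := fun e => s e.1 e.2) he'
  have hrb : r e.1 e.2 < E.sup (fun e => r e.1 e.2) + 1 :=
    Nat.lt_succ_of_le (Finset.le_sup (f := fun e => r e.1 e.2) he)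
  rcases lex_lt_aux hrb h with h1 | ⟨h1, h2⟩
  · rcases lex_lt_aux e.1.isLt h1 with h3 | ⟨h3, h4⟩
    · left; omega
    · right; exact ⟨by omega, Or.inl h4⟩
  · obtain ⟨h3, h4⟩ := lex_eq_aux e'.1.isLt e.1.isLt h1
    right
    refine ⟨by omega, Or.inr ⟨Fin.ext h4, h2⟩⟩

lemma daKey_inj {E : Finset (Fin n × Fin m)} {r s : Fin n → Fin m → ℕ}
    (hrstrict : ∀ i j k, (i, j) ∈ E → (i, k) ∈ E → r i j = r i k → j = k)
    {e e' : Fin n × Fin m} (he : e ∈ E) (he' : e' ∈ E)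
    (h : daKey E r s e = daKey E r s e') : e = e' := by
  set N := E.sup (fun e => s e.1 e.2) with hN
  have hsb : s e.1 e.2 ≤ N := Finset.le_sup (f := fun e => s e.1 e.2) he
  have hsb' : s e'.1 e'.2 ≤ N := Finset.le_sup (f := fun e => s e.1 e.2) he'
  have hrb : r e.1 e.2 < E.sup (fun e => r e.1 e.2) + 1 :=
    Nat.lt_succ_of_le (Finset.le_sup (f := fun e => r e.1 e.2) he)
  have hrb' : r e'.1 e'.2 < E.sup (fun e => r e.1 e.2) + 1 :=
    Nat.lt_succ_of_le (Finset.le_sup (f := fun e => r e.1 e.2) he')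
  obtain ⟨h1, h2⟩ := lex_eq_aux hrb hrb' h
  obtain ⟨h3, h4⟩ := lex_eq_aux e.1.isLt e'.1.isLt h1
  have hi : e.1 = e'.1 := Fin.ext h4
  have : e.2 = e'.2 := by
    apply hrstrict e.1 e.2 e'.2
    · exact (by simpa using he)
    · rw [hi]; exact (by simpa using he')
    · rw [hi] at h2 ⊢; exact h2
  exact Prod.ext hi this

end DAaux

section Greedy
variable {n m q : ℕ}

/-- Greedy choice over the list of offers in reverse processing order:
the last element of the list is considered first. -/
noncomputable def greedyCh (Cs : Fin q → Finset (Fin m)) (uq : Fin q → ℕ) :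
    List (Fin n × Fin m) → Finset (Fin n × Fin m) → Finset (Fin n × Fin m)
  | [], _ => ∅
  | a :: l, A =>
    let C := greedyCh Cs uq l A
    if a ∈ A ∧ ∀ p, a.2 ∈ Cs p → ((C.filter (fun e => e.2 ∈ Cs p)).card < uq p)
    then insert a C else C

variable {Cs : Fin q → Finset (Fin m)} {uq : Fin q → ℕ}

lemma greedyCh_subset_list {l : List (Fin n × Fin m)} {A : Finset (Fin n × Fin m)}
    {e : Fin n × Fin m} (he : e ∈ greedyCh Cs uq l A) : e ∈ l := by
  induction l with
  | nil => simp [greedyCh] at he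
  | cons a l ih =>
    simp only [greedyCh] at he
    split at he
    · rcases Finset.mem_insert.1 he with h | h
      · simp [h]
      · simp [ih h]
    · simp [ih he]

lemma greedyCh_subset {l : List (Fin n × Fin m)} {A : Finset (Fin n × Fin m)}
    {e : Fin n × Fin m} (he : e ∈ greedyCh Cs uq l A) : e ∈ A := by
  induction l with
  | nil => simp [greedyCh] at he
  | cons a l ih =>
    simp only [greedyCh] at he
    split at he
    · next hc =>
      rcases Finset.mem_insert.1 he with h | h
      · exact h ▸ hc.1
      · exact ih h
    · exact ih he

lemma greedyCh_cons_subset {l : List (Fin n × Fin m)} {A : Finset (Fin n × Fin m)}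
    {a : Fin n × Fin m} : greedyCh Cs uq l A ⊆ greedyCh Cs uq (a :: l) A := by
  intro e he
  simp only [greedyCh]
  split
  · exact Finset.mem_insert_of_mem he
  · exact he

lemma greedyCh_quota {l : List (Fin n × Fin m)} {A : Finset (Fin n × Fin m)} (p : Fin q) :
    ((greedyCh Cs uq l A).filter (fun e => e.2 ∈ Cs p)).card ≤ uq p := by
  induction l with
  | nil => simp [greedyCh]
  | cons a l ih =>
    simp only [greedyCh]
    split
    · next hc =>
      rw [Finset.filter_insert]
      split
      · next hp =>
        have hfree := hc.2 p hp
        have hcard := Finset.card_insert_le a ((greedyCh Cs uq l A).filter (fun e => e.2 ∈ Cs p))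
        omega
      · exact ih
    · exact ih

end Greedy

section Greedy2
variable {n m q : ℕ} {Cs : Fin q → Finset (Fin m)} {uq : Fin q → ℕ}

lemma greedyCh_congr {l : List (Fin n × Fin m)} {A B : Finset (Fin n × Fin m)}
    (h : ∀ e ∈ l, (e ∈ A ↔ e ∈ B)) : greedyCh Cs uq l A = greedyCh Cs uq l B := by
  induction l with
  | nil => simp [greedyCh]
  | cons a l ih =>
    have ih' := ih (fun e he => h e (List.mem_cons_of_mem a he))
    simp only [greedyCh, ih']
    have ha := h a (List.mem_cons_self)
    by_cases hcond : a ∈ B ∧ ∀ p, a.2 ∈ Cs p →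
        ((greedyCh Cs uq l B).filter (fun e => e.2 ∈ Cs p)).card < uq p
    · rw [if_pos hcond, if_pos ⟨ha.2 hcond.1, hcond.2⟩]
    · rw [if_neg hcond, if_neg (fun hc => hcond ⟨ha.1 hc.1, hc.2⟩)]

lemma greedyCh_reject {l : List (Fin n × Fin m)} {A : Finset (Fin n × Fin m)}
    (key : Fin n × Fin m → ℕ)
    (hl : l.Pairwise (fun a b => key b < key a))
    {e : Fin n × Fin m} (he : e ∈ l) (heA : e ∈ A)
    (hrej : e ∉ greedyCh Cs uq l A) :
    ∃ p, e.2 ∈ Cs p ∧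
      uq p ≤ ((greedyCh Cs uq l A).filter
        (fun x => x.2 ∈ Cs p ∧ key x < key e)).card := by
  induction l with
  | nil => simp at he
  | cons a l ih =>
    rcases List.mem_cons.1 he with rfl | he'
    · -- e is the head: it is decided last, with accumulator greedyCh l A
      have hcond : ¬ (e ∈ A ∧ ∀ p, e.2 ∈ Cs p →
          ((greedyCh Cs uq l A).filter (fun x => x.2 ∈ Cs p)).card < uq p) := by
        intro hc
        exact hrej (by simp only [greedyCh, if_pos hc]; exact Finset.mem_insert_self _ _)
      push_neg at hcond
      obtain ⟨p, hp, hcard⟩ := hcond heA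
      refine ⟨p, hp, ?_⟩
      have hkey : ∀ x ∈ greedyCh Cs uq l A, key x < key e := by
        intro x hx
        exact (List.pairwise_cons.1 hl).1 x (greedyCh_subset_list hx)
      have hsub : (greedyCh Cs uq l A).filter (fun x => x.2 ∈ Cs p) ⊆
          (greedyCh Cs uq (e :: l) A).filter (fun x => x.2 ∈ Cs p ∧ key x < key e) := by
        intro x hx
        obtain ⟨hx1, hx2⟩ := Finset.mem_filter.1 hx
        exact Finset.mem_filter.2 ⟨greedyCh_cons_subset hx1, hx2, hkey x hx1⟩
      exact le_trans hcard (Finset.card_le_card hsub)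
    · have hrej' : e ∉ greedyCh Cs uq l A := fun hmem => hrej (greedyCh_cons_subset hmem)
      obtain ⟨p, hp, hcard⟩ := ih (List.pairwise_cons.1 hl).2 he' hrej'
      refine ⟨p, hp, le_trans hcard (Finset.card_le_card ?_)⟩
      exact Finset.filter_subset_filter _ greedyCh_cons_subset

end Greedy2

section Greedy3
variable {n m q : ℕ} {Cs : Fin q → Finset (Fin m)} {uq : Fin q → ℕ}

/-- The acceptance condition of the greedy choice. -/
def fitsC (Cs : Fin q → Finset (Fin m)) (uq : Fin q → ℕ)
    (X : Finset (Fin n × Fin m)) (e : Fin n × Fin m) : Prop :=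
  ∀ p, e.2 ∈ Cs p → ((X.filter (fun x => x.2 ∈ Cs p)).card < uq p)

lemma greedyCh_cons_pos {a : Fin n × Fin m} {l : List (Fin n × Fin m)}
    {A : Finset (Fin n × Fin m)} (h1 : a ∈ A)
    (h2 : fitsC Cs uq (greedyCh Cs uq l A) a) :
    greedyCh Cs uq (a :: l) A = insert a (greedyCh Cs uq l A) := by
  simp only [greedyCh]
  split
  · rfl
  · next hc => exact absurd ⟨h1, h2⟩ hc

lemma greedyCh_cons_neg {a : Fin n × Fin m} {l : List (Fin n × Fin m)}
    {A : Finset (Fin n × Fin m)}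
    (h : ¬ (a ∈ A ∧ fitsC Cs uq (greedyCh Cs uq l A) a)) :
    greedyCh Cs uq (a :: l) A = greedyCh Cs uq l A := by
  simp only [greedyCh]
  split
  · next hc => exact absurd hc h
  · rfl

end Greedy3

section Greedy4
variable {n m q : ℕ} {Cs : Fin q → Finset (Fin m)} {uq : Fin q → ℕ}

/-- The key substitutability invariant for nested quota-sets. -/
lemma greedyCh_inv
    (hnested : ∀ p p', ((Cs p) ∩ (Cs p')).Nonempty → Cs p ⊆ Cs p' ∨ Cs p' ⊆ Cs p)
    {l : List (Fin n × Fin m)} (hl : l.Nodup)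
    {A : Finset (Fin n × Fin m)} {f : Fin n × Fin m} (hfA : f ∉ A) :
    greedyCh Cs uq l (insert f A) = greedyCh Cs uq l A ∨
    (f ∉ greedyCh Cs uq l A ∧
      greedyCh Cs uq l (insert f A) = insert f (greedyCh Cs uq l A)) ∨
    (∃ g₀ ∈ greedyCh Cs uq l A, g₀ ≠ f ∧ f ∉ greedyCh Cs uq l A ∧
      greedyCh Cs uq l (insert f A) = insert f ((greedyCh Cs uq l A).erase g₀) ∧
      ∃ pt, g₀.2 ∈ Cs pt ∧ f.2 ∈ Cs pt ∧
        uq pt ≤ ((greedyCh Cs uq l (insert f A)).filter (fun x => x.2 ∈ Cs pt)).card) := by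
  induction l with
  | nil => left; simp [greedyCh]
  | cons a l ih =>
    have hal : a ∉ l := (List.nodup_cons.1 hl).1
    have hlnd : l.Nodup := (List.nodup_cons.1 hl).2
    have haC : a ∉ greedyCh Cs uq l A := fun h => hal (greedyCh_subset_list h)
    have haC' : a ∉ greedyCh Cs uq l (insert f A) := fun h => hal (greedyCh_subset_list h)
    have hfC : f ∉ greedyCh Cs uq l A := fun h => hfA (greedyCh_subset h)
    by_cases haf : a = f
    · -- the new offer itself is processed at this step
      subst haf
      have hCC' : greedyCh Cs uq l (insert a A) = greedyCh Cs uq l A := by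
        apply greedyCh_congr
        intro e hel
        have hef : e ≠ a := fun h => hal (h ▸ hel)
        simp [Finset.mem_insert, hef]
      have h1 : greedyCh Cs uq (a :: l) A = greedyCh Cs uq l A :=
        greedyCh_cons_neg (fun hc => hfA hc.1)
      by_cases hfit : fitsC Cs uq (greedyCh Cs uq l A) a
      · right; left
        refine ⟨by rw [h1]; exact hfC, ?_⟩
        rw [greedyCh_cons_pos (Finset.mem_insert_self _ _) (by rw [hCC']; exact hfit),
          hCC', h1]
      · left
        rw [greedyCh_cons_neg (fun hc => hfit (by rw [← hCC']; exact hc.2)), hCC', h1]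
    · by_cases haA : a ∈ A
      · have haA' : a ∈ insert f A := Finset.mem_insert_of_mem haA
        rcases ih hlnd with hst | ⟨hst1, hst2⟩ |
          ⟨g₀, hg₀C, hg₀f, _hfC3, hC', pt, hgpt, hfpt, hptcard⟩
        · -- state (i): the two accumulators agree
          by_cases hfit : fitsC Cs uq (greedyCh Cs uq l A) a
          · left
            rw [greedyCh_cons_pos haA' (by rw [hst]; exact hfit),
              greedyCh_cons_pos haA hfit, hst]
          · left
            rw [greedyCh_cons_neg (fun hc => hfit (by rw [← hst]; exact hc.2)),
              greedyCh_cons_neg (fun hc => hfit hc.2), hst]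
        · -- state (ii): the new accumulator is the old one plus f
          have hcard2 : ∀ p : Fin q,
              (((greedyCh Cs uq l (insert f A)).filter (fun x => x.2 ∈ Cs p)).card) =
                ((greedyCh Cs uq l A).filter (fun x => x.2 ∈ Cs p)).card +
                  (if f.2 ∈ Cs p then 1 else 0) := by
            intro p
            rw [hst2, Finset.filter_insert]
            by_cases hfp : f.2 ∈ Cs p
            · rw [if_pos hfp, if_pos hfp,
                Finset.card_insert_of_notMem (fun h => hst1 (Finset.mem_filter.1 h).1)]
            · rw [if_neg hfp, if_neg hfp, add_zero]
          have hmono : ∀ p : Fin q,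
              ((greedyCh Cs uq l A).filter (fun x => x.2 ∈ Cs p)).card ≤
                ((greedyCh Cs uq l (insert f A)).filter (fun x => x.2 ∈ Cs p)).card := by
            intro p
            rw [hcard2 p]
            exact Nat.le_add_right _ _
          by_cases hfit : fitsC Cs uq (greedyCh Cs uq l A) a
          · by_cases hfit' : fitsC Cs uq (greedyCh Cs uq l (insert f A)) a
            · -- both accept : stay in state (ii)
              right; left
              rw [greedyCh_cons_pos haA' hfit', greedyCh_cons_pos haA hfit, hst2]
              refine ⟨?_, ?_⟩
              · simp only [Finset.mem_insert]
                push_neg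
                exact ⟨fun h => haf h.symm, hst1⟩
              · rw [Finset.insert_comm]
            · -- the enlarged pool rejects a : a is the displaced offer
              unfold fitsC at hfit'
              push_neg at hfit'
              obtain ⟨pstar, hpa, hpcard⟩ := hfit'
              have hfin : f.2 ∈ Cs pstar := by
                by_contra hfp
                have h2 := hcard2 pstar
                rw [if_neg hfp, add_zero] at h2
                have := hfit pstar hpa
                omega
              right; right
              rw [greedyCh_cons_pos haA hfit,
                greedyCh_cons_neg (A := insert f A)
                  (fun hc => absurd (hc.2 pstar hpa) (Nat.not_lt.2 hpcard))]
              refine ⟨a, Finset.mem_insert_self _ _, haf, ?_, ?_, pstar, hpa, hfin, hpcard⟩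
              · simp only [Finset.mem_insert]
                push_neg
                exact ⟨fun h => haf h.symm, hst1⟩
              · rw [Finset.erase_insert haC, hst2]
          · -- a rejected from the old pool : also rejected from the new one
            unfold fitsC at hfit
            push_neg at hfit
            obtain ⟨p, hpa, hpcard⟩ := hfit
            have hrejA : greedyCh Cs uq (a :: l) A = greedyCh Cs uq l A :=
              greedyCh_cons_neg (A := A) (fun hc => absurd (hc.2 p hpa) (Nat.not_lt.2 hpcard))
            have hrejA' : greedyCh Cs uq (a :: l) (insert f A) =
                greedyCh Cs uq l (insert f A) := by
              refine greedyCh_cons_neg (fun hc => ?_)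
              have h1 := hc.2 p hpa
              have h2 := hmono p
              omega
            right; left
            rw [hrejA, hrejA']
            exact ⟨hst1, hst2⟩
        · -- state (iii): f displaced g₀ in the accumulator
          have hcard3 : ∀ p : Fin q,
              ((greedyCh Cs uq l (insert f A)).filter (fun x => x.2 ∈ Cs p)).card +
                  (if g₀.2 ∈ Cs p then 1 else 0) =
                ((greedyCh Cs uq l A).filter (fun x => x.2 ∈ Cs p)).card +
                  (if f.2 ∈ Cs p then 1 else 0) := by
            intro p
            rw [hC']
            exact card_filter_ins_erase hfC hg₀C (fun x => x.2 ∈ Cs p)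
          have hag₀ : a ≠ g₀ := fun h => haC (h ▸ hg₀C)
          by_cases hfit : fitsC Cs uq (greedyCh Cs uq l A) a
          · -- a accepted by the old pool : accepted by the new one as well
            have hfit' : fitsC Cs uq (greedyCh Cs uq l (insert f A)) a := by
              intro pstar hpa
              by_contra hbad
              push_neg at hbad
              have hcmp := hcard3 pstar
              have hlt := hfit pstar hpa
              have hfp : f.2 ∈ Cs pstar := by
                by_contra hfp
                rw [if_neg hfp, add_zero] at hcmp
                have : (if g₀.2 ∈ Cs pstar then 1 else 0) ≤ 1 := by split <;> omega
                omega
              have hgp : g₀.2 ∉ Cs pstar := by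
                intro hgp
                rw [if_pos hgp, if_pos hfp] at hcmp
                omega
              rcases hnested pt pstar ⟨f.2, Finset.mem_inter.2 ⟨hfpt, hfp⟩⟩ with hsub | hsub
              · exact hgp (hsub hgpt)
              · have hlt2 := hfit pt (hsub hpa)
                have hcmp2 := hcard3 pt
                rw [if_pos hgpt, if_pos hfpt] at hcmp2
                omega
            right; right
            rw [greedyCh_cons_pos haA' hfit', greedyCh_cons_pos haA hfit]
            refine ⟨g₀, Finset.mem_insert_of_mem hg₀C, hg₀f, ?_, ?_, pt, hgpt, hfpt, ?_⟩
            · simp only [Finset.mem_insert]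
              push_neg
              exact ⟨fun h => haf h.symm, hfC⟩
            · rw [hC', Finset.insert_comm, Finset.erase_insert_of_ne hag₀]
            · refine le_trans hptcard (Finset.card_le_card ?_)
              exact Finset.filter_subset_filter _ (Finset.subset_insert _ _)
          · -- a rejected by the old pool : rejected by the new one as well
            unfold fitsC at hfit
            push_neg at hfit
            obtain ⟨p, hpa, hpcard⟩ := hfit
            have hrej' : ¬ fitsC Cs uq (greedyCh Cs uq l (insert f A)) a := by
              intro hc
              have hcmp := hcard3 p
              by_cases hdrop : ((greedyCh Cs uq l (insert f A)).filter
                  (fun x => x.2 ∈ Cs p)).card + 1 ≤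
                  ((greedyCh Cs uq l A).filter (fun x => x.2 ∈ Cs p)).card
              · have hgp : g₀.2 ∈ Cs p := by
                  by_contra hgp
                  rw [if_neg hgp, add_zero] at hcmp
                  have : (if f.2 ∈ Cs p then 1 else 0) ≤ 1 := by split <;> omega
                  omega
                have hfp : f.2 ∉ Cs p := by
                  intro hfp
                  rw [if_pos hgp, if_pos hfp] at hcmp
                  omega
                rcases hnested pt p ⟨g₀.2, Finset.mem_inter.2 ⟨hgpt, hgp⟩⟩ with hsub | hsub
                · exact hfp (hsub hfpt)
                · have := hc pt (hsub hpa)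
                  omega
              · push_neg at hdrop
                have := hc p hpa
                omega
            rw [greedyCh_cons_neg (A := A) (fun hc => absurd (hc.2 p hpa) (Nat.not_lt.2 hpcard)),
              greedyCh_cons_neg (A := insert f A) (fun hc => hrej' hc.2)]
            exact Or.inr (Or.inr ⟨g₀, hg₀C, hg₀f, hfC, hC', pt, hgpt, hfpt, hptcard⟩)
      · -- a is in neither pool
        have haA' : a ∉ insert f A := by
          simp only [Finset.mem_insert]
          push_neg
          exact ⟨haf, haA⟩
        rw [greedyCh_cons_neg (fun hc => haA hc.1),
          greedyCh_cons_neg (fun hc => haA' hc.1)]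
        exact ih hlnd

/-- Substitutability: a rejected offer stays rejected when the pool grows. -/
lemma greedyCh_sub
    (hnested : ∀ p p', ((Cs p) ∩ (Cs p')).Nonempty → Cs p ⊆ Cs p' ∨ Cs p' ⊆ Cs p)
    {l : List (Fin n × Fin m)} (hl : l.Nodup)
    {A : Finset (Fin n × Fin m)} {f e : Fin n × Fin m}
    (he : e ∈ greedyCh Cs uq l (insert f A)) :
    e = f ∨ e ∈ greedyCh Cs uq l A := by
  by_cases hfA : f ∈ A
  · rw [Finset.insert_eq_self.2 hfA] at he
    exact Or.inr he
  rcases greedyCh_inv hnested hl hfA (uq := uq) with h | ⟨_, h⟩ | ⟨g₀, _, _, _, h, _⟩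
  · rw [h] at he; exact Or.inr he
  · rw [h] at he
    rcases Finset.mem_insert.1 he with h' | h'
    · exact Or.inl h'
    · exact Or.inr h'
  · rw [h] at he
    rcases Finset.mem_insert.1 he with h' | h'
    · exact Or.inl h'
    · exact Or.inr (Finset.mem_of_mem_erase h')

end Greedy4

lemma sum_ind_card {n m : ℕ} (S : Finset (Fin n × Fin m)) (T : Fin n → Finset (Fin m)) :
    (∑ i, ∑ j ∈ T i, (if (i, j) ∈ S then 1 else 0)) =
      (S.filter (fun e => e.2 ∈ T e.1)).card := by
  classical
  have h1 : ∀ i : Fin n, (∑ j ∈ T i, (if (i, j) ∈ S then 1 else 0)) =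
      ((T i).filter (fun j => (i, j) ∈ S)).card := by
    intro i
    rw [Finset.card_filter]
  have h2 : ∀ i : Fin n, ((S.filter (fun e => e.2 ∈ T e.1)).filter
      (fun e => e.1 = i)).card = ((T i).filter (fun j => (i, j) ∈ S)).card := by
    intro i
    apply Finset.card_bij (fun e _ => e.2)
    · intro e he
      simp only [Finset.mem_filter] at he ⊢
      obtain ⟨⟨heS, heT⟩, hei⟩ := he
      subst hei
      exact ⟨heT, by simpa using heS⟩
    · intro e1 he1 e2 he2 h
      simp only [Finset.mem_filter] at he1 he2
      exact Prod.ext (he1.2.trans he2.2.symm) h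
    · intro j hj
      simp only [Finset.mem_filter] at hj
      exact ⟨(i, j), Finset.mem_filter.2 ⟨Finset.mem_filter.2 ⟨hj.2, hj.1⟩, rfl⟩, rfl⟩
  have h3 := Finset.card_eq_sum_card_fiberwise
    (s := S.filter (fun e => e.2 ∈ T e.1)) (t := Finset.univ) (f := Prod.fst)
    (fun e _ => Finset.mem_univ _)
  rw [h3]
  refine Finset.sum_congr rfl (fun i _ => ?_)
  rw [h1 i, ← h2 i]

/-- If the family of quota-sets of a College Admissions
instance with common quotas is nested (any two quota-sets are disjoint or one
contains the other) and preferences are strict, then a stable matching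
exists. -/
theorem nested_commonQuotas_stable_exists {n m q : ℕ}
    (E : Finset (Fin n × Fin m)) (r s : Fin n → Fin m → ℕ) (u : Fin m → ℕ)
    (Cs : Fin q → Finset (Fin m)) (uq : Fin q → ℕ)
    (hsingle : ∀ j, ∃ p, Cs p = {j} ∧ uq p = u j)
    (hsame : ∀ p j k i, j ∈ Cs p → k ∈ Cs p → (i, j) ∈ E → (i, k) ∈ E →
      s i j = s i k)
    (hrstrict : ∀ i j k, (i, j) ∈ E → (i, k) ∈ E → r i j = r i k → j = k)
    (hsstrict : ∀ p j k i i', i ≠ i' → j ∈ Cs p → k ∈ Cs p →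
      (i, j) ∈ E → (i', k) ∈ E → s i j ≠ s i' k)
    (hnested : ∀ p p', ((Cs p) ∩ (Cs p')).Nonempty →
      Cs p ⊆ Cs p' ∨ Cs p' ⊆ Cs p) :
    ∃ x : Fin n → Fin m → ℕ,
      FeasibleCQ E u Cs uq x ∧ StableCQ E r s Cs uq x := by
  classical
  -- Processing list: all offers of `E`, highest priority (score) first when
  -- read from the recursion's innermost position.
  set key : (Fin n × Fin m) → ℕ := daKey E r s with hkeydef
  set L : List (Fin n × Fin m) :=
    E.toList.mergeSort (fun a b => decide (key b ≤ key a)) with hLdef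
  have hperm : L.Perm E.toList := List.mergeSort_perm _ _
  have hmemL : ∀ e, e ∈ L ↔ e ∈ E := by
    intro e; rw [hperm.mem_iff, Finset.mem_toList]
  have hnodup : L.Nodup := hperm.nodup_iff.2 (Finset.nodup_toList E)
  have hsorted : L.Pairwise (fun a b => key b ≤ key a) := by
    have h := List.pairwise_mergeSort
      (le := fun a b => decide (key b ≤ key a))
      (fun a b c hab hbc => by
        simp only [decide_eq_true_eq] at *; omega)
      (fun a b => by
        simp only [Bool.or_eq_true, decide_eq_true_eq]; omega)
      E.toList
    exact h.imp (fun hab => by simpa using hab)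
  have hpair : L.Pairwise (fun a b => key b < key a) := by
    refine (hsorted.and hnodup).imp_of_mem ?_
    intro a b ha hb hab
    rcases hab with ⟨hle, hne⟩
    rcases lt_or_eq_of_le hle with h | h
    · exact h
    · exfalso
      rw [hkeydef] at h
      exact hne (daKey_inj hrstrict ((hmemL b).1 hb) ((hmemL a).1 ha) h).symm
  -- The deferred-acceptance loop.
  have loop : ∀ k : ℕ, ∀ A : Finset (Fin n × Fin m),
      A ⊆ E →
      (∀ i j j', (i, j) ∈ A → (i, j') ∈ E → r i j' < r i j → (i, j') ∈ A) →
      (∀ i j j', (i, j) ∈ greedyCh Cs uq L A → (i, j') ∈ A → r i j' ≤ r i j) →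
      (E \ A).card ≤ k →
      ∃ B : Finset (Fin n × Fin m), B ⊆ E ∧
        (∀ i j j', (i, j) ∈ B → (i, j') ∈ E → r i j' < r i j → (i, j') ∈ B) ∧
        (∀ i j j', (i, j) ∈ greedyCh Cs uq L B → (i, j') ∈ B → r i j' ≤ r i j) ∧
        (∀ i : Fin n, (∃ j, (i, j) ∈ greedyCh Cs uq L B) ∨
          (∀ j, (i, j) ∈ E → (i, j) ∈ B)) := by
    intro k
    induction k with
    | zero =>
      intro A hAE hprefA hS3A hcard
      refine ⟨A, hAE, hprefA, hS3A, fun i => Or.inr (fun j hj => ?_)⟩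
      have hempty : E \ A = ∅ := Finset.card_eq_zero.1 (Nat.le_zero.1 hcard)
      exact (Finset.sdiff_eq_empty_iff_subset.1 hempty) hj
    | succ k ih =>
      intro A hAE hprefA hS3A hcard
      by_cases hfin : ∀ i : Fin n, (∃ j, (i, j) ∈ greedyCh Cs uq L A) ∨
          (∀ j, (i, j) ∈ E → (i, j) ∈ A)
      · exact ⟨A, hAE, hprefA, hS3A, hfin⟩
      · push_neg at hfin
        obtain ⟨i, hheld, j₀, hj₀E, hj₀A⟩ := hfin
        have hRne : (Finset.univ.filter
            (fun j => (i, j) ∈ E ∧ (i, j) ∉ A)).Nonempty :=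
          ⟨j₀, Finset.mem_filter.2 ⟨Finset.mem_univ _, hj₀E, hj₀A⟩⟩
        obtain ⟨js, hjsR, hjmin⟩ := Finset.exists_min_image _ (fun j => r i j) hRne
        obtain ⟨-, hjsE, hjsA⟩ := Finset.mem_filter.1 hjsR
        have hA'E : insert (i, js) A ⊆ E := Finset.insert_subset hjsE hAE
        have hpref' : ∀ i1 j j', (i1, j) ∈ insert (i, js) A → (i1, j') ∈ E →
            r i1 j' < r i1 j → (i1, j') ∈ insert (i, js) A := by
          intro i1 j j' hmem hj'E hlt
          rcases Finset.mem_insert.1 hmem with hnew | hold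
          · obtain ⟨hi1, hj⟩ := Prod.ext_iff.1 hnew
            simp only at hi1 hj
            subst hi1; subst hj
            by_cases hj'A : (i1, j') ∈ A
            · exact Finset.mem_insert_of_mem hj'A
            · have hmem' : j' ∈ Finset.univ.filter
                  (fun j => (i1, j) ∈ E ∧ (i1, j) ∉ A) :=
                Finset.mem_filter.2 ⟨Finset.mem_univ _, hj'E, hj'A⟩
              have := hjmin j' hmem'
              omega
          · exact Finset.mem_insert_of_mem (hprefA i1 j j' hold hj'E hlt)
        have hS3' : ∀ i1 j j', (i1, j) ∈ greedyCh Cs uq L (insert (i, js) A) →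
            (i1, j') ∈ insert (i, js) A → r i1 j' ≤ r i1 j := by
          intro i1 j j' hch hj'A'
          rcases greedyCh_sub hnested hnodup hch with hnew | hold
          · obtain ⟨hi1, hj⟩ := Prod.ext_iff.1 hnew
            simp only at hi1 hj
            subst hi1; subst hj
            rcases Finset.mem_insert.1 hj'A' with h' | h'
            · obtain ⟨-, hj'⟩ := Prod.ext_iff.1 h'
              simp only at hj'
              subst hj'
              exact le_refl _
            · by_contra hcon
              push_neg at hcon
              exact hjsA (hprefA i1 j' j h' hjsE hcon)
          · have hi1ne : i1 ≠ i := by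
              intro h; subst h
              exact hheld j hold
            rcases Finset.mem_insert.1 hj'A' with h' | h'
            · obtain ⟨hbad, -⟩ := Prod.ext_iff.1 h'
              simp only at hbad
              exact absurd hbad hi1ne
            · exact hS3A i1 j j' hold h'
        have hcard' : (E \ insert (i, js) A).card ≤ k := by
          have heq : E \ insert (i, js) A = (E \ A).erase (i, js) := by
            ext e
            simp only [Finset.mem_sdiff, Finset.mem_erase, Finset.mem_insert]
            tauto
          have hmemdiff : (i, js) ∈ E \ A := Finset.mem_sdiff.2 ⟨hjsE, hjsA⟩
          rw [heq, Finset.card_erase_of_mem hmemdiff]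
          have : 0 < (E \ A).card := Finset.card_pos.2 ⟨_, hmemdiff⟩
          omega
        exact ih (insert (i, js) A) hA'E hpref' hS3' hcard'
  -- Run the loop from the empty pool.
  obtain ⟨B, hBE, hprefB, hS3B, hFinB⟩ := loop (E \ ∅).card ∅
    (Finset.empty_subset E)
    (fun i j j' h => absurd h (Finset.notMem_empty _))
    (fun i j j' h h' => absurd h' (Finset.notMem_empty _))
    le_rfl
  set x : Fin n → Fin m → ℕ :=
    fun i j => if (i, j) ∈ greedyCh Cs uq L B then 1 else 0 with hxdef
  have hxval : ∀ i j, x i j = if (i, j) ∈ greedyCh Cs uq L B then 1 else 0 :=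
    fun _ _ => rfl
  have hChE : ∀ e ∈ greedyCh Cs uq L B, e ∈ E := fun e he => hBE (greedyCh_subset he)
  have hxone : ∀ i j, x i j = 1 ↔ (i, j) ∈ greedyCh Cs uq L B := by
    intro i j
    rw [hxval]
    split
    · next h => exact ⟨fun _ => h, fun _ => rfl⟩
    · next h => exact ⟨fun h1 => absurd h1 (by omega), fun h1 => absurd h1 h⟩
  refine ⟨x, ?_, ?_⟩
  · -- feasibility
    have huniq : ∀ i j j', (i, j) ∈ greedyCh Cs uq L B →
        (i, j') ∈ greedyCh Cs uq L B → j = j' := by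
      intro i j j' h h'
      have h1 := hS3B i j j' h (greedyCh_subset h')
      have h2 := hS3B i j' j h' (greedyCh_subset h)
      exact hrstrict i j j' (hChE _ h) (hChE _ h') (by omega)
    refine ⟨fun i j => by rw [hxval]; split <;> omega,
      fun i j h => hChE _ ((hxone i j).1 h), fun i => ?_, fun j => ?_, fun p => ?_⟩
    · -- each applicant fills at most one seat
      have hsum : (∑ j, x i j) =
          (Finset.univ.filter (fun j => (i, j) ∈ greedyCh Cs uq L B)).card := by
        rw [Finset.card_filter]
      rw [hsum]
      refine Finset.card_le_one.2 (fun a ha b hb => ?_)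
      exact huniq i a b (Finset.mem_filter.1 ha).2 (Finset.mem_filter.1 hb).2
    · -- individual quotas, via the singleton quota-sets
      obtain ⟨p, hp, hup⟩ := hsingle j
      have hq := greedyCh_quota (Cs := Cs) (uq := uq) (l := L) (A := B) p
      have hsum : (∑ i, x i j) =
          ((greedyCh Cs uq L B).filter (fun e => e.2 ∈ Cs p)).card := by
        rw [← sum_ind_card (greedyCh Cs uq L B) (fun _ => Cs p)]
        refine Finset.sum_congr rfl (fun i _ => ?_)
        rw [hp, Finset.sum_singleton]
      omega
    · -- common quotas
      have hq := greedyCh_quota (Cs := Cs) (uq := uq) (l := L) (A := B) p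
      have hsum : countIn Cs x p =
          ((greedyCh Cs uq L B).filter (fun e => e.2 ∈ Cs p)).card := by
        unfold countIn
        rw [← sum_ind_card (greedyCh Cs uq L B) (fun _ => Cs p)]
      omega
  · -- stability
    intro i j hijE hpref
    have hx : ∀ k, (i, k) ∈ greedyCh Cs uq L B → r i j < r i k := by
      intro k hk
      exact hpref k ((hxone i k).2 hk)
    have hjnot : (i, j) ∉ greedyCh Cs uq L B := fun h => lt_irrefl _ (hx j h)
    have hjB : (i, j) ∈ B := by
      rcases hFinB i with ⟨k, hk⟩ | hall
      · exact hprefB i k j (greedyCh_subset hk) hijE (hx k hk)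
      · exact hall j hijE
    obtain ⟨p, hp, hcard⟩ := greedyCh_reject key hpair ((hmemL _).2 hijE) hjB hjnot
    refine ⟨p, hp, ?_⟩
    have hsum : countHigher Cs s x p (s i j) =
        ((greedyCh Cs uq L B).filter
          (fun e => e.2 ∈ (Cs p).filter (fun j' => s i j < s e.1 j'))).card := by
      unfold countHigher
      rw [← sum_ind_card (greedyCh Cs uq L B)
        (fun i' => (Cs p).filter (fun j' => s i j < s i' j'))]
    rw [hsum]
    refine le_trans hcard (Finset.card_le_card ?_)
    intro e he
    obtain ⟨heCh, hep, hekey⟩ := Finset.mem_filter.1 he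
    refine Finset.mem_filter.2 ⟨heCh, Finset.mem_filter.2 ⟨hep, ?_⟩⟩
    have heE : e ∈ E := hChE _ heCh
    rw [hkeydef] at hekey
    have hdec := daKey_lt (e := (i, j)) (e' := e) hijE heE hekey
    simp only at hdec
    rcases hdec with hlt | ⟨hseq, hcase⟩
    · exact hlt
    · exfalso
      rcases hcase with hvlt | ⟨hieq, hrlt⟩
      · have hne : e.1 ≠ i := by
          intro h
          rw [h] at hvlt
          exact lt_irrefl _ hvlt
        have heE' : (e.1, e.2) ∈ E := by simpa using heE
        exact hsstrict p e.2 j e.1 i hne hep hp heE' hijE hseq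
      · have hch' : (i, e.2) ∈ greedyCh Cs uq L B := by
          rw [← hieq]
          simpa using heCh
        have h1 := hx e.2 hch'
        rw [hieq] at hrlt
        omega
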